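/- Let q₁, …, q_N and p be probability measures on a measurable space, with each qᵢ absolutely continuous with respect to p and KL(qᵢ‖p) < ∞, and let q_avg = (1/N)·Σᵢ qᵢ. Then (1/N)·Σᵢ KL(qᵢ‖p) = KL(q_avg‖p) + (1/N)·Σᵢ KL(qᵢ‖q_avg). -/

import Mathlib

open MeasureTheory
open scoped ENNReal Classical

/-- The Kullback–Leibler divergence `KL(μ‖ν) = ∫ log(dμ/dν) dμ`, taking the
value `∞` when `μ` is not absolutely continuous w.r.t. `ν` or the
log-likelihood ratio is not integrable. -/
noncomputable def klDiv {Ω : Type*} [MeasurableSpace Ω] (μ ν : Measure Ω) : ℝ≥0∞ :=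
  if μ ≪ ν ∧ Integrable (llr μ ν) μ then ENNReal.ofReal (∫ x, llr μ ν x ∂μ) else ⊤

section Aux

variable {Ω : Type*} [MeasurableSpace Ω] {μ ν : Measure Ω}

/-- The negative part of the log-likelihood ratio is always integrable. -/
lemma integrable_neg_part_llr_aux [IsProbabilityMeasure μ] [IsFiniteMeasure ν] (h : μ ≪ ν) :
    Integrable (fun x ↦ max (- llr μ ν x) 0) μ := by
  refine ⟨((measurable_llr μ ν).neg.max measurable_const).aestronglyMeasurable, ?_⟩
  have h00 : (0 : Ω → ℝ) ≤ᵐ[μ] fun x ↦ max (- llr μ ν x) 0 :=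
    Filter.Eventually.of_forall fun x ↦ le_max_right _ _
  rw [hasFiniteIntegral_iff_ofReal h00]
  have hmeas : AEMeasurable (fun x ↦ ENNReal.ofReal (max (- llr μ ν x) 0)) ν :=
    ((measurable_llr μ ν).neg.max measurable_const).ennreal_ofReal.aemeasurable
  calc ∫⁻ x, ENNReal.ofReal (max (- llr μ ν x) 0) ∂μ
      = ∫⁻ x, μ.rnDeriv ν x * ENNReal.ofReal (max (- llr μ ν x) 0) ∂ν :=
        (lintegral_rnDeriv_mul h hmeas).symm
    _ ≤ ∫⁻ _, 1 ∂ν := ?_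
    _ < ⊤ := by simp [measure_lt_top]
  refine lintegral_mono_ae ?_
  filter_upwards [Measure.rnDeriv_lt_top μ ν] with x hx
  rcases eq_or_ne (μ.rnDeriv ν x) 0 with h0 | h0
  · simp [llr, h0]
  · have htR : 0 < (μ.rnDeriv ν x).toReal := ENNReal.toReal_pos h0 hx.ne
    have hlog : - llr μ ν x ≤ ((μ.rnDeriv ν x).toReal)⁻¹ - 1 := by
      have h1 := Real.log_le_sub_one_of_pos (inv_pos.mpr htR)
      rw [Real.log_inv] at h1
      simpa [llr] using h1
    have hmax : max (- llr μ ν x) 0 ≤ ((μ.rnDeriv ν x).toReal)⁻¹ := by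
      have : (0:ℝ) ≤ ((μ.rnDeriv ν x).toReal)⁻¹ := by positivity
      refine max_le (by linarith) this
    calc μ.rnDeriv ν x * ENNReal.ofReal (max (- llr μ ν x) 0)
        ≤ μ.rnDeriv ν x * ENNReal.ofReal ((μ.rnDeriv ν x).toReal)⁻¹ :=
          mul_le_mul' le_rfl (ENNReal.ofReal_le_ofReal hmax)
      _ = μ.rnDeriv ν x * (μ.rnDeriv ν x)⁻¹ := by
          rw [ENNReal.ofReal_inv_of_pos htR, ENNReal.ofReal_toReal hx.ne]
      _ = 1 := ENNReal.mul_inv_cancel h0 hx.ne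

/-- Nonnegativity of the KL integral for probability measures. -/
lemma integral_llr_nonneg_aux [IsProbabilityMeasure μ] [IsProbabilityMeasure ν] (h : μ ≪ ν)
    (hint : Integrable (llr μ ν) μ) : 0 ≤ ∫ x, llr μ ν x ∂μ := by
  have hig : Integrable (fun x ↦ (ν.rnDeriv μ x).toReal) μ :=
    Measure.integrable_toReal_rnDeriv
  have hmono : ∀ᵐ x ∂μ, - llr μ ν x ≤ (ν.rnDeriv μ x).toReal - 1 := by
    filter_upwards [exp_neg_llr h] with x hx
    have h2 := Real.add_one_le_exp (- llr μ ν x)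
    rw [hx] at h2
    linarith
  have h3 : ∫ x, - llr μ ν x ∂μ ≤ ∫ x, ((ν.rnDeriv μ x).toReal - 1) ∂μ :=
    integral_mono_ae hint.neg (hig.sub (integrable_const 1)) hmono
  rw [integral_neg] at h3
  have h4 : ∫ x, ((ν.rnDeriv μ x).toReal - 1) ∂μ ≤ 0 := by
    rw [integral_sub hig (integrable_const 1), Measure.integral_toReal_rnDeriv']
    simp [measure_univ]
  linarith

/-- Chain rule for the log-likelihood ratio. -/
lemma llr_chain_aux (μ ν ξ : Measure Ω) [SigmaFinite μ] [SigmaFinite ν] [SigmaFinite ξ]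
    (hμν : μ ≪ ν) (hνξ : ν ≪ ξ) :
    llr μ ξ =ᵐ[μ] fun x ↦ llr μ ν x + llr ν ξ x := by
  filter_upwards [(hμν.trans hνξ).ae_le (Measure.rnDeriv_mul_rnDeriv hμν),
    Measure.rnDeriv_pos hμν, hμν.ae_le (Measure.rnDeriv_pos hνξ),
    hμν.ae_le (Measure.rnDeriv_lt_top μ ν),
    (hμν.trans hνξ).ae_le (Measure.rnDeriv_lt_top ν ξ)]
    with x hx hpos1 hpos2 hlt1 hlt2
  rw [llr, llr, llr, ← hx, Pi.mul_apply, ENNReal.toReal_mul, Real.log_mul]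
  · exact (ENNReal.toReal_pos hpos1.ne' hlt1.ne).ne'
  · exact (ENNReal.toReal_pos hpos2.ne' hlt2.ne).ne'

end Aux

/-- **Index-code / ELBO decomposition (Hoffman–Johnson).**
For probability measures q₁,…,q_N ≪ p with finite KL to p, and
q_avg = (1/N)·Σᵢ qᵢ:
(1/N)·Σᵢ KL(qᵢ‖p) = KL(q_avg‖p) + (1/N)·Σᵢ KL(qᵢ‖q_avg). -/
theorem avg_klDiv_decomposition {Ω : Type*} [MeasurableSpace Ω]
    (N : ℕ) (hN : 0 < N) (q : Fin N → Measure Ω) (p : Measure Ω)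
    [∀ i, IsProbabilityMeasure (q i)] [IsProbabilityMeasure p]
    (habs : ∀ i, q i ≪ p) (hfin : ∀ i, klDiv (q i) p < ⊤) :
    (N : ℝ≥0∞)⁻¹ * ∑ i, klDiv (q i) p =
      klDiv ((N : ℝ≥0∞)⁻¹ • ∑ i, q i) p +
        (N : ℝ≥0∞)⁻¹ * ∑ i, klDiv (q i) ((N : ℝ≥0∞)⁻¹ • ∑ j, q j) := by
  classical
  have hN0 : (N : ℝ≥0∞) ≠ 0 := by
    exact_mod_cast Nat.cast_ne_zero.mpr hN.ne'
  have hNtop : (N : ℝ≥0∞) ≠ ⊤ := ENNReal.natCast_ne_top N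
  set c : ℝ≥0∞ := (N : ℝ≥0∞)⁻¹ with hc
  have hc0 : c ≠ 0 := by simp [hc, hNtop]
  have hctop : c ≠ ⊤ := by simp [hc, hN0]
  set Q : Measure Ω := c • ∑ i, q i with hQ
  have hsum_univ : (∑ i, q i) Set.univ = N := by
    rw [Measure.coe_finset_sum]
    simp [measure_univ]
  haveI : IsProbabilityMeasure Q := by
    constructor
    rw [hQ, Measure.smul_apply, hsum_univ, smul_eq_mul, hc, ENNReal.inv_mul_cancel hN0 hNtop]
  have habsQ : Q ≪ p := by
    refine Measure.AbsolutelyContinuous.mk fun s hs hps ↦ ?_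
    rw [hQ, Measure.smul_apply, Measure.coe_finset_sum]
    simp only [Finset.sum_apply]
    have : ∀ i, q i s = 0 := fun i ↦ habs i hps
    simp [this]
  haveI hSfin : IsFiniteMeasure (∑ j, q j) := by
    constructor
    rw [hsum_univ]
    exact hNtop.lt_top
  have hle : ∀ i, q i ≤ ∑ j, q j := by
    intro i
    refine Measure.le_iff.mpr fun s hs ↦ ?_
    rw [Measure.coe_finset_sum, Finset.sum_apply]
    exact Finset.single_le_sum (f := fun j ↦ q j s) (fun j _ ↦ zero_le) (Finset.mem_univ i)
  have habsQS : Q ≪ ∑ j, q j := by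
    refine Measure.AbsolutelyContinuous.mk fun s hs hSs ↦ ?_
    rw [hQ, Measure.smul_apply, hSs, smul_eq_mul, mul_zero]
  have habsiQ : ∀ i, q i ≪ Q := by
    intro i
    refine Measure.AbsolutelyContinuous.mk fun s hs hQs ↦ ?_
    rw [hQ, Measure.smul_apply, smul_eq_mul] at hQs
    have hSs : (∑ j, q j) s = 0 := by
      rcases mul_eq_zero.mp hQs with h | h
      · exact absurd h hc0
      · exact h
    have := hle i s
    rw [hSs] at this
    exact le_antisymm this zero_le
  have hbound : ∀ i, (q i).rnDeriv Q ≤ᵐ[Q] fun _ ↦ (N : ℝ≥0∞) := by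
    intro i
    have h1 : (q i).rnDeriv (∑ j, q j) ≤ᵐ[∑ j, q j] 1 :=
      Measure.rnDeriv_le_one_of_le (hle i)
    have h2 := Measure.rnDeriv_smul_right_of_ne_top (q i) (∑ j, q j) hc0 hctop
    filter_upwards [habsQS.ae_le h1, habsQS.ae_le h2] with x hx1 hx2
    have hcinv : c⁻¹ = (N : ℝ≥0∞) := by rw [hc, inv_inv]
    calc (q i).rnDeriv Q x = c⁻¹ * (q i).rnDeriv (∑ j, q j) x := by
          rw [hQ]
          rw [hx2]
          simp
      _ ≤ c⁻¹ * 1 := mul_le_mul' le_rfl hx1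
      _ = (N : ℝ≥0∞) := by rw [mul_one, hcinv]
  have hint_p : ∀ i, Integrable (llr (q i) p) (q i) := by
    intro i
    have h := hfin i
    rw [klDiv] at h
    split_ifs at h with hcond
    · exact hcond.2
    · simp at h
  -- integrability of llr (q i) Q with respect to q i
  have hApos : ∀ i, ∀ᵐ x ∂(q i), llr (q i) Q x ≤ Real.log N := by
    intro i
    filter_upwards [(habsiQ i).ae_le (hbound i)] with x hx
    have hxT : ((q i).rnDeriv Q x).toReal ≤ (N : ℝ) := by
      have := ENNReal.toReal_mono hNtop hx
      simpa using this
    rw [llr]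
    rcases le_or_gt ((q i).rnDeriv Q x).toReal 1 with h1 | h1
    · have : Real.log ((q i).rnDeriv Q x).toReal ≤ 0 :=
        Real.log_nonpos ENNReal.toReal_nonneg h1
      have hNlog : (0:ℝ) ≤ Real.log N := Real.log_nonneg (by exact_mod_cast hN)
      linarith
    · exact Real.log_le_log (by linarith) hxT
  have hintA : ∀ i, Integrable (llr (q i) Q) (q i) := by
    intro i
    have hneg := integrable_neg_part_llr_aux (habsiQ i)
    refine Integrable.mono' (hneg.add (integrable_const (Real.log N)))
      (measurable_llr _ _).aestronglyMeasurable ?_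
    filter_upwards [hApos i] with x hx
    have h0 : (0:ℝ) ≤ max (- llr (q i) Q x) 0 := le_max_right _ _
    have hNlog : (0:ℝ) ≤ Real.log N := Real.log_nonneg (by exact_mod_cast hN)
    simp only [Pi.add_apply]
    rcases le_or_gt 0 (llr (q i) Q x) with h1 | h1
    · rw [Real.norm_eq_abs, abs_of_nonneg h1]; linarith
    · rw [Real.norm_eq_abs, abs_of_neg h1]
      have : - llr (q i) Q x ≤ max (- llr (q i) Q x) 0 := le_max_left _ _
      linarith
  have hchain : ∀ i, llr (q i) p =ᵐ[q i] fun x ↦ llr (q i) Q x + llr Q p x :=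
    fun i ↦ llr_chain_aux _ _ _ (habsiQ i) habsQ
  have hintB : ∀ i, Integrable (llr Q p) (q i) := by
    intro i
    refine ((hint_p i).sub (hintA i)).congr ?_
    filter_upwards [hchain i] with x hx
    simp only [Pi.sub_apply]
    rw [hx]; ring
  have hintBQ : Integrable (llr Q p) Q := by
    rw [hQ]
    exact (integrable_finset_sum_measure.mpr fun i _ ↦ hintB i).smul_measure hctop
  -- integral identities
  have hKi : ∀ i, ∫ x, llr (q i) p x ∂(q i)
      = ∫ x, llr (q i) Q x ∂(q i) + ∫ x, llr Q p x ∂(q i) := by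
    intro i
    rw [integral_congr_ae (hchain i), integral_add (hintA i) (hintB i)]
  have hBavg : ∫ x, llr Q p x ∂Q = (N : ℝ)⁻¹ * ∑ i, ∫ x, llr Q p x ∂(q i) := by
    rw [hQ, integral_smul_measure, integral_finset_sum_measure fun i _ ↦ hintB i]
    rw [hc, smul_eq_mul]
    congr 1
    rw [ENNReal.toReal_inv]
    simp
  -- nonnegativity
  have hK0 : ∀ i, 0 ≤ ∫ x, llr (q i) p x ∂(q i) :=
    fun i ↦ integral_llr_nonneg_aux (habs i) (hint_p i)
  have hA0 : ∀ i, 0 ≤ ∫ x, llr (q i) Q x ∂(q i) :=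
    fun i ↦ integral_llr_nonneg_aux (habsiQ i) (hintA i)
  have hB0 : 0 ≤ ∫ x, llr Q p x ∂Q := integral_llr_nonneg_aux habsQ hintBQ
  -- reduce the klDiv's
  have hkl1 : ∀ i, klDiv (q i) p = ENNReal.ofReal (∫ x, llr (q i) p x ∂(q i)) :=
    fun i ↦ if_pos ⟨habs i, hint_p i⟩
  have hkl2 : klDiv Q p = ENNReal.ofReal (∫ x, llr Q p x ∂Q) := if_pos ⟨habsQ, hintBQ⟩
  have hkl3 : ∀ i, klDiv (q i) Q = ENNReal.ofReal (∫ x, llr (q i) Q x ∂(q i)) :=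
    fun i ↦ if_pos ⟨habsiQ i, hintA i⟩
  simp only [hkl1, hkl2, hkl3]
  -- turn everything into ofReal of real quantities
  have hcR : c = ENNReal.ofReal ((N : ℝ)⁻¹) := by
    rw [hc, ENNReal.ofReal_inv_of_pos (by exact_mod_cast hN), ENNReal.ofReal_natCast]
  have hNR0 : (0:ℝ) ≤ (N : ℝ)⁻¹ := by positivity
  rw [hcR, ← ENNReal.ofReal_sum_of_nonneg (fun i _ ↦ hK0 i),
    ← ENNReal.ofReal_sum_of_nonneg (fun i _ ↦ hA0 i),
    ← ENNReal.ofReal_mul hNR0, ← ENNReal.ofReal_mul hNR0,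
    ← ENNReal.ofReal_add hB0 (mul_nonneg hNR0 (Finset.sum_nonneg fun i _ ↦ hA0 i))]
  congr 1
  rw [hBavg]
  rw [Finset.sum_congr rfl fun i _ ↦ hKi i, Finset.sum_add_distrib]
  ring
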